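/- Let K be a field and let c, d, C, D ∈ K with (c, d) ≠ (0, 0) and (C, D) ≠ (0, 0). Then g^7_{00cd} and g^7_{00CD} are isomorphic if and only if one of the following holds: (a) c = C = 0 and d ≠ 0 ≠ D; (b) d = D = 0 and c ≠ 0 ≠ C; (c) c, C, d, D are all distinct from zero. -/

import Mathlib

section aux
variable {R : Type*} (a b c d e f g : R)
lemma cv0 : ![a,b,c,d,e,f,g] 0 = a := rfl
lemma cv1 : ![a,b,c,d,e,f,g] 1 = b := rfl
lemma cv2 : ![a,b,c,d,e,f,g] 2 = c := rfl
lemma cv3 : ![a,b,c,d,e,f,g] 3 = d := rfl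
lemma cv4 : ![a,b,c,d,e,f,g] 4 = e := rfl
lemma cv5 : ![a,b,c,d,e,f,g] 5 = f := rfl
lemma cv6 : ![a,b,c,d,e,f,g] 6 = g := rfl
lemma cvm0 (h : 0 < 7) : ![a,b,c,d,e,f,g] ⟨0,h⟩ = a := rfl
lemma cvm1 (h : 1 < 7) : ![a,b,c,d,e,f,g] ⟨1,h⟩ = b := rfl
lemma cvm2 (h : 2 < 7) : ![a,b,c,d,e,f,g] ⟨2,h⟩ = c := rfl
lemma cvm3 (h : 3 < 7) : ![a,b,c,d,e,f,g] ⟨3,h⟩ = d := rfl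
lemma cvm4 (h : 4 < 7) : ![a,b,c,d,e,f,g] ⟨4,h⟩ = e := rfl
lemma cvm5 (h : 5 < 7) : ![a,b,c,d,e,f,g] ⟨5,h⟩ = f := rfl
lemma cvm6 (h : 6 < 7) : ![a,b,c,d,e,f,g] ⟨6,h⟩ = g := rfl
end aux


variable (K : Type*) [Field K]

/-- The bracket of the Lie algebra `g^7_{abcd}` on `K^7` (indices `0..6` correspond to
`e_1..e_7`): the only nonzero brackets among basis vectors are `⁅e_1, e_{i+1}⁆ = e_i` for
`2 ≤ i ≤ 6`, `⁅e_4, e_7⁆ = a e_2`, `⁅e_5, e_6⁆ = b e_2`, `⁅e_5, e_7⁆ = c e_2 + (a+b) e_3`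
and `⁅e_6, e_7⁆ = d e_2 + c e_3 + (a+b) e_4`. -/
def g7b (a b c d : K) (x y : Fin 7 → K) : Fin 7 → K :=
  ![0,
    x 0 * y 2 - x 2 * y 0 + a * (x 3 * y 6 - x 6 * y 3) + b * (x 4 * y 5 - x 5 * y 4)
      + c * (x 4 * y 6 - x 6 * y 4) + d * (x 5 * y 6 - x 6 * y 5),
    x 0 * y 3 - x 3 * y 0 + (a + b) * (x 4 * y 6 - x 6 * y 4) + c * (x 5 * y 6 - x 6 * y 5),
    x 0 * y 4 - x 4 * y 0 + (a + b) * (x 5 * y 6 - x 6 * y 5),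
    x 0 * y 5 - x 5 * y 0,
    x 0 * y 6 - x 6 * y 0,
    0]

/-- The Lie algebras `g^7_{abcd}` and `g^7_{ABCD}` are isomorphic: there is a bijective
linear map preserving the brackets. -/
def g7Iso (a b c d A B C D : K) : Prop :=
  ∃ f : (Fin 7 → K) ≃ₗ[K] (Fin 7 → K),
    ∀ x y, f (g7b K a b c d x y) = g7b K A B C D (f x) (f y)

lemma iso_of_scale (c d C D α β : K) (hα : α ≠ 0) (hβ : β ≠ 0)
    (h1 : c * α ^ 3 = C * β) (h2 : d * α ^ 4 = D * β) :
    g7Iso K 0 0 c d 0 0 C D := by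
  have hμ : ∀ i : Fin 7,
      (![α, α^5*β, α^4*β, α^3*β, α^2*β, α*β, β] : Fin 7 → K) i ≠ 0 := by
    intro i
    fin_cases i <;>
      simp [cv0, cv1, cv2, cv3, cv4, cv5, cv6, hα, hβ, mul_eq_zero, pow_eq_zero_iff]
  refine ⟨LinearEquiv.piCongrRight (fun i => LinearEquiv.smulOfNeZero K K _ (hμ i)),
    fun x y => ?_⟩
  have happ : ∀ (v : Fin 7 → K) (i : Fin 7),
      (LinearEquiv.piCongrRight (fun i => LinearEquiv.smulOfNeZero K K _ (hμ i))) v i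
        = (![α, α^5*β, α^4*β, α^3*β, α^2*β, α*β, β] : Fin 7 → K) i * v i :=
    fun v i => rfl
  funext k
  fin_cases k <;>
    simp only [happ, g7b, cv0, cv1, cv2, cv3, cv4, cv5, cv6,
      cvm0, cvm1, cvm2, cvm3, cvm4, cvm5, cvm6, zero_add, add_zero, zero_mul, mul_zero]
  · linear_combination (α^2*β*(x 4*y 6 - x 6*y 4)) * h1 + (α*β*(x 5*y 6 - x 6*y 5)) * h2
  · linear_combination (α*β*(x 5*y 6 - x 6*y 5)) * h1
  · ring
  · ring
  · ring

lemma scale_of_iso (c d C D : K) (hiso : g7Iso K 0 0 c d 0 0 C D) :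
    ∃ α β : K, α ≠ 0 ∧ β ≠ 0 ∧ c * α ^ 3 = C * β ∧ d * α ^ 4 = D * β := by
  classical
  obtain ⟨f, hf⟩ := hiso
  obtain ⟨E, hE⟩ : ∃ E : Fin 7 → Fin 7 → K,
      E = fun i j => if i = j then 1 else 0 := ⟨_, rfl⟩
  obtain ⟨u, hu⟩ : ∃ u : Fin 7 → Fin 7 → K, ∀ j, u j = f (E j) := ⟨_, fun _ => rfl⟩
  have hb1 : g7b K 0 0 c d (E 0) (E 2) = E 1 := by
    rw [hE]; funext i; fin_cases i <;> simp [g7b] <;> rfl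
  have hb2 : g7b K 0 0 c d (E 0) (E 3) = E 2 := by
    rw [hE]; funext i; fin_cases i <;> simp [g7b] <;> rfl
  have hb3 : g7b K 0 0 c d (E 0) (E 4) = E 3 := by
    rw [hE]; funext i; fin_cases i <;> simp [g7b] <;> rfl
  have hb4 : g7b K 0 0 c d (E 0) (E 5) = E 4 := by
    rw [hE]; funext i; fin_cases i <;> simp [g7b] <;> rfl
  have hb5 : g7b K 0 0 c d (E 0) (E 6) = E 5 := by
    rw [hE]; funext i; fin_cases i <;> simp [g7b] <;> rfl
  have hb6 : g7b K 0 0 c d (E 4) (E 6) = c • E 1 := by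
    rw [hE]; funext i; fin_cases i <;> simp [g7b] <;> rfl
  have hb7 : g7b K 0 0 c d (E 5) (E 6) = d • E 1 + c • E 2 := by
    rw [hE]; funext i; fin_cases i <;> simp [g7b] <;> rfl
  have R1 : u 1 = g7b K 0 0 C D (u 0) (u 2) := by
    rw [hu 1, hu 0, hu 2, ← hb1]; exact hf _ _
  have R2 : u 2 = g7b K 0 0 C D (u 0) (u 3) := by
    rw [hu 2, hu 0, hu 3, ← hb2]; exact hf _ _
  have R3 : u 3 = g7b K 0 0 C D (u 0) (u 4) := by
    rw [hu 3, hu 0, hu 4, ← hb3]; exact hf _ _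
  have R4 : u 4 = g7b K 0 0 C D (u 0) (u 5) := by
    rw [hu 4, hu 0, hu 5, ← hb4]; exact hf _ _
  have R5 : u 5 = g7b K 0 0 C D (u 0) (u 6) := by
    rw [hu 5, hu 0, hu 6, ← hb5]; exact hf _ _
  have R6 : c • u 1 = g7b K 0 0 C D (u 4) (u 6) := by
    rw [hu 1, hu 4, hu 6, ← map_smul, ← hb6]; exact hf _ _
  have R7 : d • u 1 + c • u 2 = g7b K 0 0 C D (u 5) (u 6) := by
    rw [hu 1, hu 2, hu 5, hu 6, ← map_smul, ← map_smul, ← map_add, ← hb7]; exact hf _ _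
  have z10 : u 1 0 = 0 := by
    have t := congrFun R1 0; simp only [g7b, cv0] at t; linear_combination t
  have z20 : u 2 0 = 0 := by
    have t := congrFun R2 0; simp only [g7b, cv0] at t; linear_combination t
  have z30 : u 3 0 = 0 := by
    have t := congrFun R3 0; simp only [g7b, cv0] at t; linear_combination t
  have z40 : u 4 0 = 0 := by
    have t := congrFun R4 0; simp only [g7b, cv0] at t; linear_combination t
  have z50 : u 5 0 = 0 := by
    have t := congrFun R5 0; simp only [g7b, cv0] at t; linear_combination t
  have z16 : u 1 6 = 0 := by
    have t := congrFun R1 6; simp only [g7b, cv6] at t; linear_combination t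
  have z26 : u 2 6 = 0 := by
    have t := congrFun R2 6; simp only [g7b, cv6] at t; linear_combination t
  have z36 : u 3 6 = 0 := by
    have t := congrFun R3 6; simp only [g7b, cv6] at t; linear_combination t
  have z46 : u 4 6 = 0 := by
    have t := congrFun R4 6; simp only [g7b, cv6] at t; linear_combination t
  have z56 : u 5 6 = 0 := by
    have t := congrFun R5 6; simp only [g7b, cv6] at t; linear_combination t
  have p55 : u 5 5 = u 0 0 * u 6 6 - u 0 6 * u 6 0 := by
    have t := congrFun R5 5; simp only [g7b, cv5] at t; linear_combination t
  have p45 : u 4 5 = 0 := by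
    have t := congrFun R4 5; simp only [g7b, cv5] at t
    linear_combination t + u 0 0 * z56 - u 0 6 * z50
  have p35 : u 3 5 = 0 := by
    have t := congrFun R3 5; simp only [g7b, cv5] at t
    linear_combination t + u 0 0 * z46 - u 0 6 * z40
  have p25 : u 2 5 = 0 := by
    have t := congrFun R2 5; simp only [g7b, cv5] at t
    linear_combination t + u 0 0 * z36 - u 0 6 * z30
  have p14 : u 1 4 = 0 := by
    have t := congrFun R1 4; simp only [g7b, cv4] at t
    linear_combination t + u 0 0 * p25 - u 0 5 * z20
  have p24 : u 2 4 = 0 := by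
    have t := congrFun R2 4; simp only [g7b, cv4] at t
    linear_combination t + u 0 0 * p35 - u 0 5 * z30
  have p34 : u 3 4 = 0 := by
    have t := congrFun R3 4; simp only [g7b, cv4] at t
    linear_combination t + u 0 0 * p45 - u 0 5 * z40
  have p44 : u 4 4 = u 0 0 * u 5 5 := by
    have t := congrFun R4 4; simp only [g7b, cv4] at t
    linear_combination t - u 0 5 * z50
  have p54 : u 5 4 = u 0 0 * u 6 5 - u 0 5 * u 6 0 := by
    have t := congrFun R5 4; simp only [g7b, cv4] at t; linear_combination t
  obtain ⟨Z, hZ⟩ : ∃ Z, f Z = E 0 := ⟨f.symm (E 0), f.apply_symm_apply _⟩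
  obtain ⟨W, hW⟩ : ∃ W, f W = E 6 := ⟨f.symm (E 6), f.apply_symm_apply _⟩
  have hfc : ∀ (x : Fin 7 → K) (k : Fin 7), f x k =
      x 0 * u 0 k + x 1 * u 1 k + x 2 * u 2 k + x 3 * u 3 k + x 4 * u 4 k
        + x 5 * u 5 k + x 6 * u 6 k := by
    intro x k
    have h1 : f x = ∑ j : Fin 7, x j • u j := by
      conv_lhs => rw [pi_eq_sum_univ x]
      rw [map_sum]
      refine Finset.sum_congr rfl fun j _ => ?_
      rw [map_smul, hu j, hE]
    rw [h1]
    simp [Fin.sum_univ_seven]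
  have hz0 : Z 0 * u 0 0 + Z 6 * u 6 0 = 1 := by
    have t := congrFun hZ 0
    rw [hfc Z 0] at t
    simp only [hE] at t
    simp at t
    linear_combination t - Z 1 * z10 - Z 2 * z20 - Z 3 * z30 - Z 4 * z40 - Z 5 * z50
  have hz6 : Z 0 * u 0 6 + Z 6 * u 6 6 = 0 := by
    have t := congrFun hZ 6
    rw [hfc Z 6] at t
    simp only [hE] at t
    simp at t
    linear_combination t - Z 1 * z16 - Z 2 * z26 - Z 3 * z36 - Z 4 * z46 - Z 5 * z56
  have hw0 : W 0 * u 0 0 + W 6 * u 6 0 = 0 := by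
    have t := congrFun hW 0
    rw [hfc W 0] at t
    simp only [hE] at t
    simp at t
    linear_combination t - W 1 * z10 - W 2 * z20 - W 3 * z30 - W 4 * z40 - W 5 * z50
  have hw6 : W 0 * u 0 6 + W 6 * u 6 6 = 1 := by
    have t := congrFun hW 6
    rw [hfc W 6] at t
    simp only [hE] at t
    simp at t
    linear_combination t - W 1 * z16 - W 2 * z26 - W 3 * z36 - W 4 * z46 - W 5 * z56
  have hdet : (u 0 0 * u 6 6 - u 0 6 * u 6 0) * (Z 0 * W 6 - Z 6 * W 0) = 1 := by
    linear_combination (W 0 * u 0 6 + W 6 * u 6 6) * hz0 + hw6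
      - (W 0 * u 0 0 + W 6 * u 6 0) * hz6
  have hΔ : u 0 0 * u 6 6 - u 0 6 * u 6 0 ≠ 0 := by
    intro h0
    rw [h0, zero_mul] at hdet
    exact one_ne_zero hdet.symm
  have key : (u 0 0 * u 6 6 - u 0 6 * u 6 0) * u 6 0 = 0 := by
    have t := congrFun R7 4
    simp only [g7b, cv4, Pi.add_apply, Pi.smul_apply, smul_eq_mul] at t
    linear_combination t - d * p14 - c * p24 + u 6 5 * z50 - u 6 0 * p55
  have h60 : u 6 0 = 0 := by
    rcases mul_eq_zero.mp key with h0 | h0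
    · exact absurd h0 hΔ
    · exact h0
  have hα : u 0 0 ≠ 0 := by
    intro h0; apply hΔ; rw [h0, h60]; ring
  have hβ : u 6 6 ≠ 0 := by
    intro h0; apply hΔ; rw [h0, h60]; ring
  have p33 : u 3 3 = u 0 0 * u 4 4 := by
    have t := congrFun R3 3; simp only [g7b, cv3] at t
    linear_combination t - u 0 4 * z40
  have p43 : u 4 3 = u 0 0 * u 5 4 := by
    have t := congrFun R4 3; simp only [g7b, cv3] at t
    linear_combination t - u 0 4 * z50
  have p22 : u 2 2 = u 0 0 * u 3 3 := by
    have t := congrFun R2 2; simp only [g7b, cv2] at t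
    linear_combination t - u 0 3 * z30 + C * u 0 5 * z36 - C * u 0 6 * p35
  have p32 : u 3 2 = u 0 0 * u 4 3 := by
    have t := congrFun R3 2; simp only [g7b, cv2] at t
    linear_combination t - u 0 3 * z40 + C * u 0 5 * z46 - C * u 0 6 * p45
  have p11 : u 1 1 = u 0 0 * u 2 2 := by
    have t := congrFun R1 1; simp only [g7b, cv1] at t
    linear_combination t - u 0 2 * z20 + C * u 0 4 * z26 - C * u 0 6 * p24
      + D * u 0 5 * z26 - D * u 0 6 * p25
  have p21 : u 2 1 = u 0 0 * u 3 2 := by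
    have t := congrFun R2 1; simp only [g7b, cv1] at t
    linear_combination t - u 0 2 * z30 + C * u 0 4 * z36 - C * u 0 6 * p34
      + D * u 0 5 * z36 - D * u 0 6 * p35
  have Eq1 : c * u 1 1 = C * (u 4 4 * u 6 6) := by
    have t := congrFun R6 1
    simp only [g7b, cv1, Pi.smul_apply, smul_eq_mul] at t
    linear_combination t + u 6 2 * z40 - u 4 2 * h60 - C * u 6 4 * z46
      + D * u 6 6 * p45 - D * u 6 5 * z46
  have Eq2 : d * u 1 1 + c * u 2 1 = C * (u 5 4 * u 6 6) + D * (u 5 5 * u 6 6) := by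
    have t := congrFun R7 1
    simp only [g7b, cv1, Pi.add_apply, Pi.smul_apply, smul_eq_mul] at t
    linear_combination t + u 6 2 * z50 - u 5 2 * h60 - C * u 6 4 * z56 - D * u 6 5 * z56
  have q44 : u 4 4 = u 0 0 ^ 2 * u 6 6 := by rw [p44, p55, h60]; ring
  have q11 : u 1 1 = u 0 0 ^ 5 * u 6 6 := by rw [p11, p22, p33, p44, p55, h60]; ring
  have q54 : u 5 4 = u 0 0 * u 6 5 := by rw [p54, h60]; ring
  have q55 : u 5 5 = u 0 0 * u 6 6 := by rw [p55, h60]; ring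
  have q21 : u 2 1 = u 0 0 ^ 4 * u 6 5 := by rw [p21, p32, p43, p54, h60]; ring
  have e1 : c * u 0 0 ^ 3 = C * u 6 6 := by
    have hne : u 0 0 ^ 2 * u 6 6 ≠ 0 := mul_ne_zero (pow_ne_zero _ hα) hβ
    apply mul_left_cancel₀ hne
    linear_combination Eq1 - c * q11 + C * u 6 6 * q44
  have e2 : d * u 0 0 ^ 4 = D * u 6 6 := by
    have hne : u 0 0 * u 6 6 ≠ 0 := mul_ne_zero hα hβ
    apply mul_left_cancel₀ hne
    linear_combination Eq2 - d * q11 - c * q21 + C * u 6 6 * q54 + D * u 6 6 * q55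
      - (u 0 0 * u 6 5) * e1
  exact ⟨u 0 0, u 6 6, hα, hβ, e1, e2⟩

/-- `g^7_{00cd}` and `g^7_{00CD}` (not both parameters zero on each side) are isomorphic
iff: (a) `c = C = 0` and `d ≠ 0 ≠ D`; or (b) `d = D = 0` and `c ≠ 0 ≠ C`; or (c) `c, C, d, D`
are all nonzero. -/
theorem stmt13 (c d C D : K) (h : (c, d) ≠ (0, 0)) (h' : (C, D) ≠ (0, 0)) :
    g7Iso K 0 0 c d 0 0 C D ↔
      (c = 0 ∧ C = 0 ∧ d ≠ 0 ∧ D ≠ 0) ∨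
      (d = 0 ∧ D = 0 ∧ c ≠ 0 ∧ C ≠ 0) ∨
      (c ≠ 0 ∧ C ≠ 0 ∧ d ≠ 0 ∧ D ≠ 0) := by
  constructor
  · intro hiso
    obtain ⟨α, β, hα, hβ, e1, e2⟩ := scale_of_iso K c d C D hiso
    by_cases hc : c = 0
    · have hC : C = 0 := by
        have : C * β = 0 := by rw [← e1, hc]; ring
        rcases mul_eq_zero.mp this with h0 | h0
        · exact h0
        · exact absurd h0 hβ
      have hd : d ≠ 0 := by
        intro hd0; exact h (by rw [hc, hd0])
      have hD : D ≠ 0 := by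
        intro hD0
        apply hd
        have : d * α ^ 4 = 0 := by rw [e2, hD0]; ring
        rcases mul_eq_zero.mp this with h0 | h0
        · exact h0
        · exact absurd h0 (pow_ne_zero _ hα)
      exact Or.inl ⟨hc, hC, hd, hD⟩
    · have hC : C ≠ 0 := by
        intro hC0
        apply hc
        have : c * α ^ 3 = 0 := by rw [e1, hC0]; ring
        rcases mul_eq_zero.mp this with h0 | h0
        · exact h0
        · exact absurd h0 (pow_ne_zero _ hα)
      by_cases hd : d = 0
      · have hD : D = 0 := by
          have : D * β = 0 := by rw [← e2, hd]; ring
          rcases mul_eq_zero.mp this with h0 | h0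
          · exact h0
          · exact absurd h0 hβ
        exact Or.inr (Or.inl ⟨hd, hD, hc, hC⟩)
      · have hD : D ≠ 0 := by
          intro hD0
          apply hd
          have : d * α ^ 4 = 0 := by rw [e2, hD0]; ring
          rcases mul_eq_zero.mp this with h0 | h0
          · exact h0
          · exact absurd h0 (pow_ne_zero _ hα)
        exact Or.inr (Or.inr ⟨hc, hC, hd, hD⟩)
  · rintro (⟨hc, hC, hd, hD⟩ | ⟨hd, hD, hc, hC⟩ | ⟨hc, hC, hd, hD⟩)
    · refine iso_of_scale K c d C D 1 (d / D) one_ne_zero (div_ne_zero hd hD) ?_ ?_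
      · rw [hc, hC]; ring
      · field_simp
    · refine iso_of_scale K c d C D 1 (c / C) one_ne_zero (div_ne_zero hc hC) ?_ ?_
      · field_simp
      · rw [hd, hD]; ring
    · refine iso_of_scale K c d C D (c * D / (d * C))
        (c * (c * D / (d * C)) ^ 3 / C) ?_ ?_ ?_ ?_
      · exact div_ne_zero (mul_ne_zero hc hD) (mul_ne_zero hd hC)
      · exact div_ne_zero (mul_ne_zero hc (pow_ne_zero _
          (div_ne_zero (mul_ne_zero hc hD) (mul_ne_zero hd hC)))) hC
      · field_simp
      · field_simp
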